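/- arXiv:1506.08401 — 3 statements merged into one kernel-verified Lean document; each statement's English description precedes it below -/
import Mathlib

section
/- Let p ≥ 5, f ≥ 2, e = p^f − 1, ν = e/(p−1) − 1 = p + p² + ⋯ + p^{f−1}. Let (α_i)_{i∈ℤ} be a 2f-periodic sequence with values in [0, e−1] and (h_i) a 2f-periodic sequence with h_i ∈ [0, p−1] and h_{i+f} = p−1−h_i, satisfying α_{i+1} ≡ p·α_i + h_i (mod e). Define ε_i = 1 if h_i = p−1 and 0 otherwise, and define the symbol X_i to be AB if α_i ∈ [ν/p + ε_{i+f}, (p−1)ν/p − ε_i) and O if α_i ∈ (ν, e). Assume moreover that α_{i+1} = p·α_i + h_i whenever α_i ≤ (p−1)ν/p − ε_i. Then for every i: if X_i = AB then X_{i+1} = O, i.e. if ν/p + ε_{i+f} ≤ α_i < (p−1)ν/p − ε_i then ν < α_{i+1} < e. -/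
/-- Lemma 2.1.4 (i), abstract form: if `X_i = AB`, i.e.
`ν/p + ε_{i+f} ≤ α_i < (p-1)ν/p - ε_i`, then `X_{i+1} = O`, i.e. `ν < α_{i+1} < e`. -/
theorem stmt_3 (p : ℤ) (hp : 5 ≤ p) (f : ℕ) (hf : 2 ≤ f)
    (e ν νp : ℤ) (he : e = p ^ f - 1)
    (hν : ν = ∑ j ∈ Finset.Ico 1 f, p ^ j) (hνp : ν = p * νp)
    (α h ε : ℤ → ℤ)
    (hαper : ∀ i, α (i + 2 * f) = α i)
    (hhper : ∀ i, h (i + 2 * f) = h i)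
    (hαbound : ∀ i, 0 ≤ α i ∧ α i ≤ e - 1)
    (hhbound : ∀ i, 0 ≤ h i ∧ h i ≤ p - 1)
    (hhf : ∀ i, h (i + f) = p - 1 - h i)
    (hε : ∀ i, ε i = if h i = p - 1 then 1 else 0)
    (hcong : ∀ i, α (i + 1) ≡ p * α i + h i [ZMOD e])
    (heq : ∀ i, α i ≤ (p - 1) * νp - ε i → α (i + 1) = p * α i + h i) :
    ∀ i, νp + ε (i + f) ≤ α i → α i < (p - 1) * νp - ε i →
      ν < α (i + 1) ∧ α (i + 1) < e := by
  intro i h1 h2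
  have key : α (i + 1) = p * α i + h i := heq i h2.le
  -- (p-1)*ν = e + 1 - p
  have hsum : (∑ j ∈ Finset.range f, p ^ j) = 1 + ν := by
    rw [hν, Finset.range_eq_Ico, Finset.sum_eq_sum_Ico_succ_bot (by omega : 0 < f)]
    simp
  have hgeo : (∑ j ∈ Finset.range f, p ^ j) * (p - 1) = p ^ f - 1 := geom_sum_mul p f
  have hpν : (p - 1) * ν = e + 1 - p := by
    rw [he, ← hgeo, hsum]; ring
  have hεi : ε i = if h i = p - 1 then 1 else 0 := hε i
  have hεi0 : 0 ≤ ε i := by rw [hεi]; split <;> norm_num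
  have hεf : ε (i + f) = if h i = 0 then 1 else 0 := by
    rw [hε (i + f), hhf i]
    by_cases h0 : h i = 0 <;> simp [h0] <;> omega
  have hhb := hhbound i
  -- lower bound
  have hlow : ν < α (i + 1) := by
    by_cases h0 : h i = 0
    · have hεf1 : ε (i + f) = 1 := by rw [hεf]; simp [h0]
      have : νp + 1 ≤ α i := by rw [hεf1] at h1; linarith
      nlinarith [this, hp]
    · have hh1 : 1 ≤ h i := by omega
      have hεf0 : 0 ≤ ε (i + f) := by rw [hεf]; split <;> norm_num
      have : νp ≤ α i := by linarith
      nlinarith [this, hp]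
  -- upper bound
  have hup : α (i + 1) < e := by
    have hai : α i ≤ (p - 1) * νp - ε i - 1 := by omega
    have : p * α i ≤ p * ((p - 1) * νp - ε i - 1) := by
      apply mul_le_mul_of_nonneg_left hai (by linarith)
    have hexp : p * ((p - 1) * νp - ε i - 1) = (p - 1) * ν - p * ε i - p := by
      rw [hνp]; ring
    nlinarith [hεi0, hp]
  exact ⟨hlow, hup⟩
end

section
/- With the same setup, if ν < α_{i+1} < e (i.e. X_{i+1} = O) then either ν < α_i < e or ν/p + ε_{i+f} ≤ α_i < (p−1)ν/p − ε_i (i.e. X_i ∈ {O, AB}). -/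
/-- Lemma 2.1.4 (ii), abstract form: if `X_{i+1} = O`, i.e. `ν < α_{i+1} < e`,
then `X_i ∈ {O, AB}`, i.e. `ν < α_i < e` or `ν/p + ε_{i+f} ≤ α_i < (p-1)ν/p - ε_i`. -/
theorem stmt_4 (p : ℤ) (hp : 5 ≤ p) (f : ℕ) (hf : 2 ≤ f)
    (e ν νp : ℤ) (he : e = p ^ f - 1)
    (hν : ν = ∑ j ∈ Finset.Ico 1 f, p ^ j) (hνp : ν = p * νp)
    (α h ε : ℤ → ℤ)
    (hαper : ∀ i, α (i + 2 * f) = α i)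
    (hhper : ∀ i, h (i + 2 * f) = h i)
    (hαbound : ∀ i, 0 ≤ α i ∧ α i ≤ e - 1)
    (hhbound : ∀ i, 0 ≤ h i ∧ h i ≤ p - 1)
    (hhf : ∀ i, h (i + f) = p - 1 - h i)
    (hε : ∀ i, ε i = if h i = p - 1 then 1 else 0)
    (hcong : ∀ i, α (i + 1) ≡ p * α i + h i [ZMOD e])
    (heq : ∀ i, α (i + 1) = p * α i + h i ↔ α i < (p - 1) * νp - ε i)
    (heq' : ∀ i, (p - 1) * νp - ε i < α i → α i ≤ ν → α (i + 1) = p * α i + h i - e) :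
    ∀ i, ν < α (i + 1) → α (i + 1) < e →
      (ν < α i ∧ α i < e) ∨ (νp + ε (i + f) ≤ α i ∧ α i < (p - 1) * νp - ε i) := by
  intro i h1 h2
  have hp1 : (1 : ℤ) ≤ p := by linarith
  have hpf1 : p ^ 1 ≤ p ^ f := pow_le_pow_right₀ hp1 (by omega)
  have hepos : 0 < e := by rw [he]; simp only [pow_one] at hpf1; linarith
  have hgeom : (p - 1) * ν = p ^ f - p := by
    have hs : ∑ j ∈ Finset.Ico 1 f, (p : ℤ) ^ j
        = (∑ j ∈ Finset.range f, p ^ j) - ∑ j ∈ Finset.range 1, p ^ j :=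
      Finset.sum_Ico_eq_sub _ (by omega)
    have hg : (∑ j ∈ Finset.range f, (p : ℤ) ^ j) * (p - 1) = p ^ f - 1 :=
      geom_sum_mul p f
    rw [hν, hs]
    simp only [Finset.range_one, Finset.sum_singleton, pow_zero]
    linear_combination hg
  have hpν : p * ν = ν + p ^ f - p := by linear_combination hgeom
  have hhi := hhbound i
  have hαi := hαbound i
  by_cases hc : α i < (p - 1) * νp - ε i
  · right
    refine ⟨?_, hc⟩
    by_contra hlt
    push_neg at hlt
    have heqi := (heq i).mpr hc
    have hεf := hε (i + f)
    rw [hhf i] at hεf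
    by_cases hh0 : h i = 0
    · have hε1 : ε (i + f) = 1 := by rw [hεf, if_pos (by omega)]
      have hle : α i ≤ νp := by omega
      have := mul_le_mul_of_nonneg_left hle (show (0:ℤ) ≤ p by linarith)
      rw [← hνp] at this
      linarith [heqi, hh0.le, hh0.ge]
    · have hε0 : ε (i + f) = 0 := by rw [hεf, if_neg (by omega)]
      have hle : α i ≤ νp - 1 := by omega
      have := mul_le_mul_of_nonneg_left hle (show (0:ℤ) ≤ p by linarith)
      have hpv : p * (νp - 1) = ν - p := by linear_combination -hνp
      linarith
  · push_neg at hc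
    by_cases hc2 : ν < α i
    · exact Or.inl ⟨hc2, by linarith [hαi.2]⟩
    · push_neg at hc2
      exfalso
      rcases lt_or_eq_of_le hc with hlt | heqc
      · have hA := heq' i hlt hc2
        have hmul := mul_le_mul_of_nonneg_left hc2 (show (0:ℤ) ≤ p by linarith)
        linarith
      · -- boundary case: α i = (p-1)νp - ε i
        have hεi := hε i
        have key : p * α i + p * ε i = p ^ f - p := by
          linear_combination (-p) * heqc - (p - 1) * hνp + hgeom
        have hv0 : 0 ≤ p * α i + h i := by
          have := mul_nonneg (show (0:ℤ) ≤ p by linarith) hαi.1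
          linarith
        have hv1 : p * α i + h i ≤ e - 1 := by
          by_cases hh : h i = p - 1
          · rw [hεi, if_pos hh] at key
            linarith
          · rw [hεi, if_neg hh] at key
            have : h i ≤ p - 2 := by omega
            linarith
        have hmod := hcong i
        have hd : e ∣ (p * α i + h i - α (i + 1)) := hmod.dvd
        obtain ⟨k, hk⟩ := hd
        have hA1 := hαbound (i + 1)
        have hk0 : k = 0 := by
          rcases lt_trichotomy k 0 with hk' | hk' | hk'
          · have : e * k ≤ e * (-1) := mul_le_mul_of_nonneg_left (by omega) hepos.le
            linarith
          · exact hk'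
          · have : e * 1 ≤ e * k := mul_le_mul_of_nonneg_left (by omega) hepos.le
            linarith
        have hAeq : α (i + 1) = p * α i + h i := by
          rw [hk0, mul_zero] at hk; linarith
        have := (heq i).mp hAeq
        linarith
end

section
/- Let p ≥ 5, f ≥ 2, e = p^f − 1, ν = p + ⋯ + p^{f−1}. If (α_i) is a 2f-periodic integer sequence satisfying α_{i+1} + α_{i+f+1} − ν = p·(α_i + α_{i+f} − ν) for all i, and |α_i + α_{i+f} − ν| < ν/p + 1 for all i, then α_i + α_{i+f} = ν for all i. -/
/-- Key estimate in Lemma 2.1.6: if `α_{i+1} + α_{i+f+1} - ν = p (α_i + α_{i+f} - ν)`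
for all `i` and `|α_i + α_{i+f} - ν| < ν/p + 1` for all `i`, then `α_i + α_{i+f} = ν`. -/
theorem stmt_7 (p : ℤ) (hp : 5 ≤ p) (f : ℕ) (hf : 2 ≤ f)
    (ν νp : ℤ) (hν : ν = ∑ j ∈ Finset.Ico 1 f, p ^ j) (hνp : ν = p * νp)
    (α : ℤ → ℤ)
    (hαper : ∀ i, α (i + 2 * f) = α i)
    (hrec : ∀ i, α (i + 1) + α (i + f + 1) - ν = p * (α i + α (i + f) - ν))
    (hbound : ∀ i, |α i + α (i + f) - ν| < νp + 1) :
    ∀ i, α i + α (i + f) = ν := by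
  set b : ℤ → ℤ := fun i => α i + α (i + f) - ν with hb
  have hstep : ∀ i, b (i + 1) = p * b i := by
    intro i
    have := hrec i
    simp only [hb]
    have : α (i + 1) + α (i + 1 + f) - ν = p * (α i + α (i + f) - ν) := by
      rw [show i + 1 + (f : ℤ) = i + f + 1 by ring]; exact hrec i
    exact this
  have hiter : ∀ (n : ℕ) (i : ℤ), b (i + n) = p ^ n * b i := by
    intro n
    induction n with
    | zero => intro i; simp
    | succ k ih =>
      intro i
      have : (i + (k + 1 : ℕ) : ℤ) = (i + k) + 1 := by push_cast; ring
      rw [this, hstep, ih, pow_succ]; ring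
  intro i
  have hper : b (i + 2 * f) = b i := by
    simp only [hb]
    rw [hαper i, show i + 2 * (f : ℤ) + (f : ℤ) = (i + f) + 2 * f by ring,
      hαper (i + f)]
  have h2 : p ^ (2 * f) * b i = b i := by
    have := hiter (2 * f) i
    push_cast at this
    rw [← this]; exact hper
  have hp1 : 1 < p ^ (2 * f) := one_lt_pow₀ (by omega) (by omega)
  have hzero : b i = 0 := by nlinarith [sq_nonneg (b i)]
  have := hzero
  simp only [hb] at this
  omega
end
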